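/- No proper power w^k (k ≥ 2) of a nontrivial element w of the free group F(A,B) is primitive in F(A,B). -/
import Mathlib


abbrev F2 := FreeGroup Bool

def A : F2 := FreeGroup.of true

def B : F2 := FreeGroup.of false

/-- `(x, y)` is a basis (free generating pair) of the free group `F2 = F(A,B)`. -/
def IsBasis (x y : F2) : Prop := ∃ e : F2 ≃* F2, e A = x ∧ e B = y

/-- `w` is primitive: it is part of some basis of `F2`. -/
def IsPrimitive (w : F2) : Prop := ∃ x y : F2, IsBasis x y ∧ (w = x ∨ w = y)

/-- If `w ^ k` equals the image of a generator under an automorphism, then `k ∣ 1`. -/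
lemma key (w : F2) (k : ℕ) (e : F2 ≃* F2) (b : Bool) (h : w ^ k = e (FreeGroup.of b)) :
    (k : ℤ) ∣ 1 := by
  -- homomorphism to Multiplicative ℤ sending generator b to 1, the other to 0
  let φ : F2 →* Multiplicative ℤ :=
    FreeGroup.lift (fun c => if c = b then Multiplicative.ofAdd (1 : ℤ) else 1)
  let χ : F2 →* Multiplicative ℤ := φ.comp e.symm.toMonoidHom
  have hχ : χ (w ^ k) = Multiplicative.ofAdd (1 : ℤ) := by
    simp [χ, h, φ, FreeGroup.lift_apply_of]
  rw [map_pow] at hχ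
  have : (k : ℤ) * Multiplicative.toAdd (χ w) = 1 := by
    have := congrArg Multiplicative.toAdd hχ
    simpa [toAdd_pow] using this
  exact ⟨_, this.symm⟩

theorem stmt_9 (w : F2) (hw : w ≠ 1) (k : ℕ) (hk : 2 ≤ k) : ¬ IsPrimitive (w ^ k) := by
  rintro ⟨x, y, ⟨e, hA, hB⟩, hxy⟩
  have hdvd : (k : ℤ) ∣ 1 := by
    rcases hxy with h | h
    · exact key w k e true (by rw [h, ← hA]; rfl)
    · exact key w k e false (by rw [h, ← hB]; rfl)
  have := Int.le_of_dvd one_pos hdvd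
  omega
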